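/- Under the discrete mismatch setup with e_0 = 0, let g : X → ℝ be an L_g-Lipschitz constraint function (L_g ≥ 0), and define the tightening ε_t = L_g · Σ_{k=0}^{t−1} L_f^{t−1−k} ‖Δ(x^true_k, u_k)‖. If the planned state satisfies the tightened constraint g(x_t) + ε_t ≤ 0, then the true state satisfies the original constraint: g(x^true_t) ≤ 0. -/

import Mathlib

/-- **Tightening certificate.** Under the discrete mismatch setup with `e₀ = 0`,
if `g` is `L_g`-Lipschitz and the planned state satisfies the tightened
constraint `g(x_t) + ε_t ≤ 0` with
`ε_t = L_g · ∑_{k<t} L_f^{t-1-k} ‖Δ(x^true_k, u_k)‖`, then the true state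
satisfies the original constraint `g(x^true_t) ≤ 0`. -/
theorem tightening_certificate
    {X : Type*} [NormedAddCommGroup X] [NormedSpace ℝ X] {U : Type*}
    (fp ft : X × U → X) (Lf : ℝ) (hLf : 0 ≤ Lf)
    (hlip : ∀ (x x' : X) (u : U), ‖fp (x, u) - fp (x', u)‖ ≤ Lf * ‖x - x'‖)
    (g : X → ℝ) (Lg : ℝ) (hLg : 0 ≤ Lg)
    (hglip : ∀ x x' : X, |g x - g x'| ≤ Lg * ‖x - x'‖)
    (u : ℕ → U) (x xt : ℕ → X)
    (hx : ∀ t, x (t + 1) = fp (x t, u t))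
    (hxt : ∀ t, xt (t + 1) = ft (xt t, u t))
    (h0 : xt 0 - x 0 = 0) (t : ℕ)
    (htight : g (x t) +
      Lg * ∑ k ∈ Finset.range t, Lf ^ (t - 1 - k) * ‖ft (xt k, u k) - fp (xt k, u k)‖
        ≤ 0) :
    g (xt t) ≤ 0 := by
  have key : ∀ n : ℕ, ‖xt n - x n‖ ≤
      ∑ k ∈ Finset.range n, Lf ^ (n - 1 - k) * ‖ft (xt k, u k) - fp (xt k, u k)‖ := by
    intro n
    induction n with
    | zero => simp [h0]
    | succ n ih =>
      have step : ‖xt (n + 1) - x (n + 1)‖ ≤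
          ‖ft (xt n, u n) - fp (xt n, u n)‖ + Lf * ‖xt n - x n‖ := by
        rw [hxt n, hx n]
        calc ‖ft (xt n, u n) - fp (x n, u n)‖
            = ‖(ft (xt n, u n) - fp (xt n, u n)) + (fp (xt n, u n) - fp (x n, u n))‖ := by
              rw [sub_add_sub_cancel]
          _ ≤ ‖ft (xt n, u n) - fp (xt n, u n)‖ + ‖fp (xt n, u n) - fp (x n, u n)‖ :=
              norm_add_le _ _
          _ ≤ _ := by
              gcongr
              exact hlip _ _ _
      refine step.trans ?_
      have hsum : Lf * ‖xt n - x n‖ ≤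
          Lf * ∑ k ∈ Finset.range n, Lf ^ (n - 1 - k) * ‖ft (xt k, u k) - fp (xt k, u k)‖ := by
        gcongr
      refine (add_le_add le_rfl hsum).trans ?_
      rw [Finset.sum_range_succ]
      have heq : ∀ k ∈ Finset.range n,
          Lf * (Lf ^ (n - 1 - k) * ‖ft (xt k, u k) - fp (xt k, u k)‖)
          = Lf ^ (n + 1 - 1 - k) * ‖ft (xt k, u k) - fp (xt k, u k)‖ := by
        intro k hk
        have hk' : k < n := Finset.mem_range.mp hk
        have : n + 1 - 1 - k = (n - 1 - k) + 1 := by omega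
        rw [this, pow_succ]
        ring
      rw [Finset.mul_sum, Finset.sum_congr rfl heq]
      simp [Nat.sub_self]
      ring_nf
      simp
  have hg : g (xt t) ≤ g (x t) + Lg * ‖xt t - x t‖ := by
    have := (abs_le.mp (hglip (xt t) (x t))).2
    linarith
  have := key t
  have : Lg * ‖xt t - x t‖ ≤
      Lg * ∑ k ∈ Finset.range t, Lf ^ (t - 1 - k) * ‖ft (xt k, u k) - fp (xt k, u k)‖ := by
    gcongr
  linarith
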